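/- Let G be a connected simple graph that admits an embedding with scale λ (λ a positive natural number) into ℤ^n. Then the graph distance d_G satisfies the 5-gonal inequality: for all vertices a, b, c, x, y, d_G(x,y) + d_G(a,b) + d_G(a,c) + d_G(b,c) ≤ d_G(x,a) + d_G(x,b) + d_G(x,c) + d_G(y,a) + d_G(y,b) + d_G(y,c). -/
import Mathlib

/-- The 5-gonal inequality for five points on the integer line. -/
theorem line_five_gonal (p q r s t : ℤ) :
    |s - t| + |p - q| + |p - r| + |q - r| ≤
      |s - p| + |s - q| + |s - r| + |t - p| + |t - q| + |t - r| := by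
  simp only [Int.abs_eq_natAbs]
  omega

/-- If a connected simple graph admits an embedding with scale λ > 0
into `ℤ^n`, then its graph distance satisfies the 5-gonal inequality. -/
theorem five_gonal_of_scale_embedding {V : Type*} (G : SimpleGraph V) (hG : G.Connected)
    (lam n : ℕ) (hlam : 0 < lam) (f : V → Fin n → ℤ)
    (hf : ∀ u v : V, (lam : ℤ) * (G.dist u v : ℤ) = ∑ i, |f u i - f v i|)
    (a b c x y : V) :
    G.dist x y + G.dist a b + G.dist a c + G.dist b c ≤
      G.dist x a + G.dist x b + G.dist x c + G.dist y a + G.dist y b + G.dist y c := by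
  have key : (lam : ℤ) * ((G.dist x y + G.dist a b + G.dist a c + G.dist b c : ℕ) : ℤ) ≤
      (lam : ℤ) * ((G.dist x a + G.dist x b + G.dist x c + G.dist y a + G.dist y b
        + G.dist y c : ℕ) : ℤ) := by
    push_cast
    rw [mul_add, mul_add, mul_add, mul_add, mul_add, mul_add, mul_add, mul_add,
      hf x y, hf a b, hf a c, hf b c, hf x a, hf x b, hf x c, hf y a, hf y b, hf y c,
      ← Finset.sum_add_distrib, ← Finset.sum_add_distrib, ← Finset.sum_add_distrib,
      ← Finset.sum_add_distrib, ← Finset.sum_add_distrib, ← Finset.sum_add_distrib,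
      ← Finset.sum_add_distrib, ← Finset.sum_add_distrib]
    exact Finset.sum_le_sum fun i _ => line_five_gonal (f a i) (f b i) (f c i) (f x i) (f y i)
  have hlam' : (0 : ℤ) < (lam : ℤ) := by exact_mod_cast hlam
  have := le_of_mul_le_mul_left key hlam'
  exact_mod_cast this
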